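/- Fix c, B̃ > 0 and 0 < v < g_tr, and set λ = 0. Then lim_{k→∞} k² v (g_tr − v) exp(k(g_tr − v)²) · E_rel(g_tr, v) = 2π² B̃ c g_tr, where E_rel(g_tr, v) := 16π² B̃ c ∫_{g_tr}^{∞} exp(−k(v−g)²) · [(1 − exp(−4kvg))/(4kvg)] · g² dg. Equivalently, for g_tr > v, E_rel(g_tr, v) ∼ 2π² B̃ c g_tr exp(−k(g_tr−v)²) / (k² v (g_tr−v)) as k → ∞, which is a rapidly decaying function of g_tr − v. -/

import Mathlib

open MeasureTheory Real Filter

noncomputable section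

/-- The error bound `E_rel(g_tr, v)` for Maxwell-type collisions (`λ = 0`), as a function of the
width parameter `k`:
`E_rel(g_tr,v) = 16π² B̃ c ∫_{g_tr}^∞ e^{−k(v−g)²} [(1−e^{−4kvg})/(4kvg)] g² dg`. -/
def Erel (Btil c k gtr v : ℝ) : ℝ :=
  16 * π ^ 2 * Btil * c *
    ∫ g in Set.Ioi gtr,
      Real.exp (-k * (v - g) ^ 2) * ((1 - Real.exp (-(4 * k * v * g))) / (4 * k * v * g)) * g ^ 2

open Set Topology


lemma integral_Ioi_shift (f : ℝ → ℝ) (c a : ℝ) :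
    ∫ x in Ioi a, f (x + c) = ∫ x in Ioi (a + c), f x := by
  have h := (measurePreserving_add_right (volume : Measure ℝ) c).setIntegral_preimage_emb
    (measurableEmbedding_addRight c) f (Ioi (a + c))
  simpa using h

lemma tendsto_exp_neg_mul {b : ℝ} (hb : 0 < b) :
    Tendsto (fun y : ℝ => exp (-(b * y))) atTop (𝓝 0) := by
  have h1 : Tendsto (fun y : ℝ => -(b * y)) atTop atBot :=
    tendsto_neg_atTop_atBot.comp (Tendsto.const_mul_atTop hb tendsto_id)
  exact Real.tendsto_exp_atBot.comp h1

lemma integral_exp_neg_mul_Ioi_zero {b : ℝ} (hb : 0 < b) :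
    ∫ x in Ioi (0:ℝ), exp (-(b * x)) = 1 / b := by
  have hderiv : ∀ x ∈ Ici (0:ℝ), HasDerivAt (fun y => -exp (-(b * y)) / b) (exp (-(b * x))) x := by
    intro x _
    have h : HasDerivAt (fun y : ℝ => -(b * y)) (-b) x := by
      exact ((hasDerivAt_id' x).const_mul b).neg.congr_deriv (by ring)
    have h2 := (h.exp).neg.div_const b
    exact h2.congr_deriv (by rw [mul_neg, neg_neg, div_eq_iff hb.ne'])
  have hint : IntegrableOn (fun x : ℝ => exp (-(b * x))) (Ioi 0) := by
    simpa [neg_mul] using exp_neg_integrableOn_Ioi 0 hb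
  have htend : Tendsto (fun y : ℝ => -exp (-(b * y)) / b) atTop (𝓝 0) := by
    have := ((tendsto_exp_neg_mul hb).neg).div_const b
    simpa using this
  have := integral_Ioi_of_hasDerivAt_of_tendsto' hderiv hint htend
  rw [this]
  simp [hb.ne']
  ring

lemma tail_eq (w a k : ℝ) (hk : 0 < k) :
    k * exp (k * a ^ 2) * ∫ g in Ioi (w + a), exp (-(k * (g - w) ^ 2))
      = ∫ s in Ioi (0:ℝ), exp (-(s ^ 2 / k + 2 * a * s)) := by
  have h1 : ∫ g in Ioi (w + a), exp (-(k * (g - w) ^ 2))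
      = ∫ x in Ioi a, exp (-(k * x ^ 2)) := by
    rw [add_comm w a, ← integral_Ioi_shift (fun g => exp (-(k * (g - w) ^ 2))) w a]
    simp
  have h2 : ∫ x in Ioi a, exp (-(k * x ^ 2))
      = ∫ t in Ioi (0:ℝ), exp (-(k * (t + a) ^ 2)) := by
    rw [integral_Ioi_shift (fun x => exp (-(k * x ^ 2))) a 0, zero_add]
  have h3 : ∫ t in Ioi (0:ℝ), exp (k * a ^ 2) * exp (-(k * (t + a) ^ 2))
      = ∫ t in Ioi (0:ℝ), (fun s => exp (-(s ^ 2 / k + 2 * a * s))) (k * t) := by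
    refine setIntegral_congr_fun measurableSet_Ioi fun t ht => ?_
    rw [← Real.exp_add]
    congr 1
    field_simp
    ring
  have h4 := integral_comp_mul_left_Ioi (fun s => exp (-(s ^ 2 / k + 2 * a * s))) 0 hk
  rw [h1, h2, mul_assoc, ← MeasureTheory.integral_const_mul, h3, h4]
  rw [mul_zero] at h4 ⊢
  simp [smul_eq_mul, ← mul_assoc, mul_inv_cancel₀ hk.ne']

lemma tail_limit (w a : ℝ) (ha : 0 < a) :
    Tendsto (fun k : ℝ => k * exp (k * a ^ 2) * ∫ g in Ioi (w + a), exp (-(k * (g - w) ^ 2)))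
      atTop (𝓝 (1 / (2 * a))) := by
  have hlim : Tendsto (fun k : ℝ => ∫ s in Ioi (0:ℝ), exp (-(s ^ 2 / k + 2 * a * s))) atTop
      (𝓝 (∫ s in Ioi (0:ℝ), exp (-(2 * a * s)))) := by
    apply tendsto_integral_filter_of_dominated_convergence (fun s => exp (-(2 * a * s)))
    · filter_upwards with k
      exact Continuous.aestronglyMeasurable (by continuity)
    · filter_upwards [eventually_gt_atTop (0:ℝ)] with k hk
      filter_upwards with s
      rw [Real.norm_eq_abs, Real.abs_exp]
      apply Real.exp_le_exp.2
      have : 0 ≤ s ^ 2 / k := div_nonneg (sq_nonneg s) hk.le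
      linarith
    · have h := exp_neg_integrableOn_Ioi 0 (by positivity : (0:ℝ) < 2 * a)
      simp only [neg_mul] at h
      exact h
    · filter_upwards with s
      have h1 : Tendsto (fun k : ℝ => s ^ 2 / k) atTop (𝓝 0) :=
        tendsto_const_nhds.div_atTop tendsto_id
      have h2 : Tendsto (fun k : ℝ => -(s ^ 2 / k + 2 * a * s)) atTop (𝓝 (-(2 * a * s))) := by
        simpa using (h1.add tendsto_const_nhds).neg
      exact (Real.continuous_exp.tendsto _).comp h2
  have hval : ∫ s in Ioi (0:ℝ), exp (-(2 * a * s)) = 1 / (2 * a) := by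
    simpa [mul_assoc] using integral_exp_neg_mul_Ioi_zero (by positivity : (0:ℝ) < 2 * a)
  rw [hval] at hlim
  apply hlim.congr'
  filter_upwards [eventually_gt_atTop (0:ℝ)] with k hk
  exact (tail_eq w a k hk).symm

lemma gauss_integrableOn (s gtr k : ℝ) (hk : 0 < k) :
    IntegrableOn (fun g : ℝ => exp (-(k * (g - s) ^ 2))) (Ioi gtr) := by
  have h : Integrable (fun x : ℝ => exp (-k * x ^ 2)) := integrable_exp_neg_mul_sq hk
  have h2 : Integrable (fun x : ℝ => exp (-k * (x - s) ^ 2)) := h.comp_sub_right s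
  simpa [neg_mul] using h2.integrableOn

lemma moment_tendsto (s k : ℝ) (hk : 0 < k) :
    Tendsto (fun x : ℝ => -exp (-(k * (x - s) ^ 2)) / (2 * k)) atTop (𝓝 0) := by
  have h0 : Tendsto (fun x : ℝ => x - s) atTop atTop :=
    tendsto_atTop_add_const_right atTop (-s) tendsto_id
  have h1 : Tendsto (fun x : ℝ => k * (x - s) ^ 2) atTop atTop :=
    Tendsto.const_mul_atTop hk ((tendsto_pow_atTop two_ne_zero).comp h0)
  have h2 : Tendsto (fun x : ℝ => exp (-(k * (x - s) ^ 2))) atTop (𝓝 0) :=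
    Real.tendsto_exp_atBot.comp (tendsto_neg_atTop_atBot.comp h1)
  simpa using (h2.neg).div_const (2 * k)

lemma moment_hasDerivAt (s k : ℝ) (hk : 0 < k) (x : ℝ) :
    HasDerivAt (fun y : ℝ => -exp (-(k * (y - s) ^ 2)) / (2 * k))
      ((x - s) * exp (-(k * (x - s) ^ 2))) x := by
  have h0 : HasDerivAt (fun y : ℝ => y - s) 1 x := (hasDerivAt_id x).sub_const s
  have h1 : HasDerivAt (fun y : ℝ => (y - s) ^ 2) (2 * (x - s)) x := by
    exact (h0.pow 2).congr_deriv (by simp)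
  have h2 : HasDerivAt (fun y : ℝ => -(k * (y - s) ^ 2)) (-(k * (2 * (x - s)))) x :=
    (h1.const_mul k).neg
  have h3 := (h2.exp).neg.div_const (2 * k)
  exact h3.congr_deriv (by rw [mul_neg, neg_neg, div_eq_iff (by positivity)]; ring)

lemma moment_integrableOn (s gtr k : ℝ) (hk : 0 < k) (hs : s ≤ gtr) :
    IntegrableOn (fun g : ℝ => (g - s) * exp (-(k * (g - s) ^ 2))) (Ioi gtr) := by
  refine integrableOn_Ioi_deriv_of_nonneg' (fun x _ => moment_hasDerivAt s k hk x)
    (fun x hx => ?_) (moment_tendsto s k hk)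
  exact mul_nonneg (by simp at hx; linarith) (exp_pos _).le

lemma moment_integral (s gtr k : ℝ) (hk : 0 < k) (hs : s ≤ gtr) :
    ∫ g in Ioi gtr, (g - s) * exp (-(k * (g - s) ^ 2))
      = exp (-(k * (gtr - s) ^ 2)) / (2 * k) := by
  have := integral_Ioi_of_hasDerivAt_of_nonneg' (fun x _ => moment_hasDerivAt s k hk x)
    (fun x hx => mul_nonneg (by simp at hx; linarith) (exp_pos _).le) (moment_tendsto s k hk)
  rw [this]
  ring

lemma J_integrableOn (s gtr k : ℝ) (hk : 0 < k) (hs : s ≤ gtr) :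
    IntegrableOn (fun g : ℝ => g * exp (-(k * (g - s) ^ 2))) (Ioi gtr) := by
  have h := (moment_integrableOn s gtr k hk hs).add
    ((gauss_integrableOn s gtr k hk).const_mul s)
  refine MeasureTheory.IntegrableOn.congr_fun h (fun x _ => ?_) measurableSet_Ioi
  simp only [Pi.add_apply]
  ring

lemma J_integral (s gtr k : ℝ) (hk : 0 < k) (hs : s ≤ gtr) :
    ∫ g in Ioi gtr, g * exp (-(k * (g - s) ^ 2))
      = exp (-(k * (gtr - s) ^ 2)) / (2 * k) + s * ∫ g in Ioi gtr, exp (-(k * (g - s) ^ 2)) := by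
  have heq : ∀ x ∈ Ioi gtr, x * exp (-(k * (x - s) ^ 2))
      = (x - s) * exp (-(k * (x - s) ^ 2)) + s * exp (-(k * (x - s) ^ 2)) := by
    intro x _; ring
  rw [setIntegral_congr_fun measurableSet_Ioi heq,
    integral_add (moment_integrableOn s gtr k hk hs) ((gauss_integrableOn s gtr k hk).const_mul s),
    moment_integral s gtr k hk hs, MeasureTheory.integral_const_mul]


/-- for `0 < v < g_tr`,
`k² v (g_tr − v) e^{k(g_tr − v)²} E_rel(g_tr, v) → 2π² B̃ c g_tr` as `k → ∞`; equivalently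
`E_rel(g_tr, v) ∼ 2π² B̃ c g_tr e^{−k(g_tr−v)²} / (k² v (g_tr−v))`. -/
theorem Erel_asymptotics_exterior (c Btil v gtr : ℝ) (hc : 0 < c) (hB : 0 < Btil)
    (hv : 0 < v) (hvg : v < gtr) :
    Tendsto
      (fun k : ℝ =>
        k ^ 2 * v * (gtr - v) * Real.exp (k * (gtr - v) ^ 2) * Erel Btil c k gtr v) atTop
      (nhds (2 * π ^ 2 * Btil * c * gtr)) := by
  have ha : 0 < gtr - v := by linarith
  have hb : 0 < gtr + v := by linarith
  have hΦ : Tendsto (fun k : ℝ =>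
      k * exp (k * (gtr - v) ^ 2) * ∫ g in Ioi gtr, exp (-(k * (g - v) ^ 2)))
      atTop (𝓝 (1 / (2 * (gtr - v)))) := by
    have := tail_limit v (gtr - v) ha
    rwa [show v + (gtr - v) = gtr by ring] at this
  have hΨ : Tendsto (fun k : ℝ =>
      k * exp (k * (gtr + v) ^ 2) * ∫ g in Ioi gtr, exp (-(k * (g + v) ^ 2)))
      atTop (𝓝 (1 / (2 * (gtr + v)))) := by
    have := tail_limit (-v) (gtr + v) hb
    rw [show -v + (gtr + v) = gtr by ring] at this
    simpa [sub_neg_eq_add] using this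
  have hE : Tendsto (fun k : ℝ => exp (k * ((gtr - v) ^ 2 - (gtr + v) ^ 2))) atTop (𝓝 0) := by
    have hc2 : 0 < (gtr + v) ^ 2 - (gtr - v) ^ 2 := by nlinarith
    refine (tendsto_exp_neg_mul hc2).congr (fun k => ?_)
    congr 1; ring
  have hL : Tendsto (fun k : ℝ => (4 * π ^ 2 * Btil * c * (gtr - v)) *
      ((1 - exp (k * ((gtr - v) ^ 2 - (gtr + v) ^ 2))) / 2
        + v * ((k * exp (k * (gtr - v) ^ 2) * ∫ g in Ioi gtr, exp (-(k * (g - v) ^ 2)))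
          + exp (k * ((gtr - v) ^ 2 - (gtr + v) ^ 2)) *
            (k * exp (k * (gtr + v) ^ 2) * ∫ g in Ioi gtr, exp (-(k * (g + v) ^ 2)))))) atTop
      (𝓝 ((4 * π ^ 2 * Btil * c * (gtr - v)) *
        ((1 - 0) / 2 + v * (1 / (2 * (gtr - v)) + 0 * (1 / (2 * (gtr + v))))))) :=
    Tendsto.const_mul _ (((tendsto_const_nhds.sub hE).div_const 2).add
      ((hΦ.add (hE.mul hΨ)).const_mul v))
  have hval : (4 * π ^ 2 * Btil * c * (gtr - v)) *
      ((1 - 0) / 2 + v * (1 / (2 * (gtr - v)) + 0 * (1 / (2 * (gtr + v)))))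
      = 2 * π ^ 2 * Btil * c * gtr := by
    field_simp
    ring
  rw [hval] at hL
  refine hL.congr' ?_
  filter_upwards [eventually_gt_atTop (0:ℝ)] with k hk
  have hptwise : ∀ g ∈ Ioi gtr,
      exp (-k * (v - g) ^ 2) * ((1 - exp (-(4 * k * v * g))) / (4 * k * v * g)) * g ^ 2
        = (g * exp (-(k * (g - v) ^ 2)) - g * exp (-(k * (g + v) ^ 2))) / (4 * k * v) := by
    intro g hg
    have hg0 : 0 < g := lt_trans (lt_trans hv hvg) hg
    have e1 : -k * (v - g) ^ 2 = -(k * (g - v) ^ 2) := by ring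
    have e2 : exp (-(k * (g - v) ^ 2)) * exp (-(4 * k * v * g)) = exp (-(k * (g + v) ^ 2)) := by
      rw [← exp_add]; congr 1; ring
    rw [e1, ← e2]
    field_simp
  have hint_eq : (∫ g in Ioi gtr,
      exp (-k * (v - g) ^ 2) * ((1 - exp (-(4 * k * v * g))) / (4 * k * v * g)) * g ^ 2)
      = ((∫ g in Ioi gtr, g * exp (-(k * (g - v) ^ 2)))
          - ∫ g in Ioi gtr, g * exp (-(k * (g + v) ^ 2))) / (4 * k * v) := by
    rw [setIntegral_congr_fun measurableSet_Ioi hptwise, integral_div]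
    congr 1
    refine integral_sub (J_integrableOn v gtr k hk hvg.le) ?_
    have := J_integrableOn (-v) gtr k hk (by linarith)
    simp only [sub_neg_eq_add] at this
    exact this
  have hJv := J_integral v gtr k hk hvg.le
  have hJw := J_integral (-v) gtr k hk (by linarith)
  simp only [sub_neg_eq_add] at hJw
  rw [Erel, hint_eq, hJv, hJw]
  have hEeq : exp (k * ((gtr - v) ^ 2 - (gtr + v) ^ 2))
      = exp (k * (gtr - v) ^ 2) * (exp (k * (gtr + v) ^ 2))⁻¹ := by
    rw [← Real.exp_neg, ← Real.exp_add]; congr 1; ring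
  rw [hEeq, Real.exp_neg, Real.exp_neg]
  have hA := Real.exp_ne_zero (k * (gtr - v) ^ 2)
  have hB' := Real.exp_ne_zero (k * (gtr + v) ^ 2)
  set Ta := ∫ g in Ioi gtr, exp (-(k * (g - v) ^ 2)) with hTa
  set Tb := ∫ g in Ioi gtr, exp (-(k * (g + v) ^ 2)) with hTb
  set A := exp (k * (gtr - v) ^ 2) with hAdef
  set B := exp (k * (gtr + v) ^ 2) with hBdef
  field_simp
  ring

end
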